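/- Let X be a compact subset of ℂ², let m, n be positive integers, and let π : ℂ² → ℂ² be defined by π(z, w) = (zᵐ, wⁿ). Suppose π⁻¹(X) = X₁₁ ∪ X₁₂ ∪ ... ∪ X_{mn}, where X₁₁ is compact and, setting ρ = exp(2πi/m) and τ = exp(2πi/n), X_{kl} = {(ρ^{k−1} z, τ^{l−1} w) : (z, w) ∈ X₁₁} for 1 ≤ k ≤ m, 1 ≤ l ≤ n. If R(π⁻¹(X)) = C(π⁻¹(X)), then R(X) = C(X). -/

import Mathlib

open Complex MvPolynomial

noncomputable section

/-- `R(K) = C(K)` for `K ⊆ ℂ²` (with `ℂ²` realized as `Fin 2 → ℂ`): every continuous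
function on `K` is a uniform limit on `K` of rational functions with poles off `K`. -/
def RatEqC (K : Set (Fin 2 → ℂ)) : Prop :=
  ∀ f : (Fin 2 → ℂ) → ℂ, ContinuousOn f K → ∀ ε : ℝ, 0 < ε →
    ∃ P Q : MvPolynomial (Fin 2) ℂ, (∀ x ∈ K, eval x Q ≠ 0) ∧
      ∀ x ∈ K, ‖f x - eval x P / eval x Q‖ < ε

namespace Stmt3Aux

lemma pow_mod {ζ : ℂ} {m : ℕ} (hζ : ζ ^ m = 1) (a : ℕ) : ζ ^ a = ζ ^ (a % m) := by
  conv_lhs => rw [← Nat.div_add_mod a m]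
  rw [pow_add, pow_mul, hζ, one_pow, one_mul]

/-- Scaling the variables of a polynomial. -/
noncomputable def scaleP (c : Fin 2 → ℂ) (R : MvPolynomial (Fin 2) ℂ) : MvPolynomial (Fin 2) ℂ :=
  bind₁ (fun i => MvPolynomial.C (c i) * MvPolynomial.X i) R

lemma eval_scaleP (c x : Fin 2 → ℂ) (R : MvPolynomial (Fin 2) ℂ) :
    eval x (scaleP c R) = eval (fun i => c i * x i) R := by
  rw [scaleP]
  show eval₂Hom (RingHom.id ℂ) x _ = eval₂Hom (RingHom.id ℂ) (fun i => c i * x i) R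
  rw [eval₂Hom_bind₁]
  have h : (fun i => (eval₂Hom (RingHom.id ℂ) x) (MvPolynomial.C (c i) * MvPolynomial.X i))
      = fun i => c i * x i := by
    funext i
    simp
  rw [h]

lemma scaleP_monomial (c : Fin 2 → ℂ) (v : Fin 2 →₀ ℕ) (a : ℂ) :
    scaleP c (monomial v a) = monomial v ((∏ i, c i ^ v i) * a) := by
  have hs : (∏ i ∈ v.support, c i ^ v i) = ∏ i, c i ^ v i :=
    Finset.prod_subset (Finset.subset_univ _) (by
      intro i _ hi
      simp [Finsupp.notMem_support_iff.mp hi])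
  rw [scaleP, bind₁_monomial, monomial_eq, Finsupp.prod]
  rw [show (∏ i ∈ v.support, (MvPolynomial.C (c i) * MvPolynomial.X i) ^ v i)
      = MvPolynomial.C (∏ i ∈ v.support, c i ^ v i) * ∏ i ∈ v.support, MvPolynomial.X i ^ v i by
    rw [map_prod, ← Finset.prod_mul_distrib]
    exact Finset.prod_congr rfl fun i _ => by rw [mul_pow, map_pow]]
  rw [hs, map_mul]
  ring

lemma coeff_scaleP (c : Fin 2 → ℂ) (R : MvPolynomial (Fin 2) ℂ) (d : Fin 2 →₀ ℕ) :
    coeff d (scaleP c R) = (∏ i, c i ^ d i) * coeff d R := by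
  conv_lhs => rw [R.as_sum]
  rw [show scaleP c (∑ v ∈ R.support, monomial v (coeff v R))
      = ∑ v ∈ R.support, scaleP c (monomial v (coeff v R)) from
    map_sum (bind₁ fun i => MvPolynomial.C (c i) * MvPolynomial.X i) _ _]
  rw [MvPolynomial.coeff_sum]
  simp only [scaleP_monomial, coeff_monomial]
  rw [Finset.sum_ite_eq' R.support d (fun v => (∏ i, c i ^ v i) * coeff v R)]
  by_cases hd : d ∈ R.support
  · simp [hd]
  · simp [hd, MvPolynomial.notMem_support_iff.mp hd]

lemma prod_erase_eq_prod_ite (F : (ℕ × ℕ) → ℂ) : True := trivial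

end Stmt3Aux

open Stmt3Aux

/-- Let `π(z,w) = (zᵐ, wⁿ)` and suppose `π⁻¹(X)` is the union of the
`m·n` rotated copies `X_{kl} = {(ρᵏ⁻¹z, τˡ⁻¹w) : (z,w) ∈ X₁₁}` of a compact set `X₁₁`,
where `ρ = exp(2πi/m)`, `τ = exp(2πi/n)`.  If `R(π⁻¹(X)) = C(π⁻¹(X))` then `R(X) = C(X)`. -/
theorem stmt3 (X : Set (Fin 2 → ℂ)) (hX : IsCompact X) (m n : ℕ) (hm : 0 < m) (hn : 0 < n)
    (π : (Fin 2 → ℂ) → (Fin 2 → ℂ)) (hπ : π = fun p => ![p 0 ^ m, p 1 ^ n])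
    (ρ τ : ℂ) (hρ : ρ = Complex.exp (2 * Real.pi * Complex.I / m))
    (hτ : τ = Complex.exp (2 * Real.pi * Complex.I / n))
    (X₁₁ : Set (Fin 2 → ℂ)) (hX₁₁ : IsCompact X₁₁)
    (hdecomp : π ⁻¹' X =
      ⋃ k ∈ Finset.range m, ⋃ l ∈ Finset.range n,
        (fun p : Fin 2 → ℂ => ![ρ ^ k * p 0, τ ^ l * p 1]) '' X₁₁)
    (hR : RatEqC (π ⁻¹' X)) :
    RatEqC X := by
  clear hdecomp hX₁₁ hX
  intro f hf ε hε
  haveI : NeZero m := ⟨hm.ne'⟩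
  haveI : NeZero n := ⟨hn.ne'⟩
  have hρprim : IsPrimitiveRoot ρ m := hρ ▸ Complex.isPrimitiveRoot_exp m hm.ne'
  have hτprim : IsPrimitiveRoot τ n := hτ ▸ Complex.isPrimitiveRoot_exp n hn.ne'
  have hρm : ρ ^ m = 1 := hρprim.pow_eq_one
  have hτn : τ ^ n = 1 := hτprim.pow_eq_one
  set Y := π ⁻¹' X with hY
  -- the scaling factors
  set c : ZMod m × ZMod n → Fin 2 → ℂ := fun u => ![ρ ^ u.1.val, τ ^ u.2.val] with hc
  have hcmul : ∀ (u w : ZMod m × ZMod n) (x : Fin 2 → ℂ),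
      (fun i => c u i * (c w i * x i)) = fun i => c (u + w) i * x i := by
    intro u w x
    funext i
    fin_cases i
    · show ρ ^ u.1.val * (ρ ^ w.1.val * x 0) = ρ ^ (u.1 + w.1).val * x 0
      rw [← mul_assoc, ← pow_add, ZMod.val_add, ← pow_mod hρm]
    · show τ ^ u.2.val * (τ ^ w.2.val * x 1) = τ ^ (u.2 + w.2).val * x 1
      rw [← mul_assoc, ← pow_add, ZMod.val_add, ← pow_mod hτn]
  -- π is invariant under the scalings
  have hπc : ∀ (u : ZMod m × ZMod n) (y : Fin 2 → ℂ), π (fun i => c u i * y i) = π y := by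
    intro u y
    rw [hπ]
    funext i
    fin_cases i
    · show (ρ ^ u.1.val * y 0) ^ m = y 0 ^ m
      rw [mul_pow, ← pow_mul, mul_comm u.1.val m, pow_mul, hρm, one_pow, one_mul]
    · show (τ ^ u.2.val * y 1) ^ n = y 1 ^ n
      rw [mul_pow, ← pow_mul, mul_comm u.2.val n, pow_mul, hτn, one_pow, one_mul]
  have hYinv : ∀ (u : ZMod m × ZMod n), ∀ y ∈ Y, (fun i => c u i * y i) ∈ Y := by
    intro u y hy
    simp only [hY, Set.mem_preimage] at hy ⊢
    rwa [hπc]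
  -- continuity of f ∘ π on Y
  have hπcont : Continuous π := by
    rw [hπ]
    refine continuous_pi fun i => ?_
    fin_cases i
    · show Continuous fun p : Fin 2 → ℂ => p 0 ^ m
      exact (continuous_apply (0 : Fin 2)).pow m
    · show Continuous fun p : Fin 2 → ℂ => p 1 ^ n
      exact (continuous_apply (1 : Fin 2)).pow n
  have hg : ContinuousOn (f ∘ π) Y := hf.comp hπcont.continuousOn (fun y hy => hy)
  obtain ⟨P, Q, hQ, happ⟩ := hR (f ∘ π) hg ε hε
  -- evaluation shorthands
  set a : (Fin 2 → ℂ) → (ZMod m × ZMod n) → ℂ := fun x u => eval (fun i => c u i * x i) P with ha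
  set b : (Fin 2 → ℂ) → (ZMod m × ZMod n) → ℂ := fun x u => eval (fun i => c u i * x i) Q with hb
  have hb_ne : ∀ y ∈ Y, ∀ u, b y u ≠ 0 := fun y hy u => hQ _ (hYinv u y hy)
  -- symmetrized polynomials
  set Q' : MvPolynomial (Fin 2) ℂ := ∏ u : ZMod m × ZMod n, scaleP (c u) Q with hQ'
  set P' : MvPolynomial (Fin 2) ℂ :=
    ∑ u : ZMod m × ZMod n, scaleP (c u) P * ∏ v ∈ Finset.univ.erase u, scaleP (c v) Q with hP'
  have hQ'eval : ∀ x, eval x Q' = ∏ u, b x u := by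
    intro x
    rw [hQ', map_prod]
    exact Finset.prod_congr rfl fun u _ => eval_scaleP _ _ _
  have hprod_erase : ∀ (F : (ZMod m × ZMod n) → ℂ) (u : ZMod m × ZMod n),
      (∏ v ∈ Finset.univ.erase u, F v) = ∏ v, (if v = u then 1 else F v) := by
    intro F u
    rw [← Finset.mul_prod_erase Finset.univ _ (Finset.mem_univ u), if_pos rfl, one_mul]
    exact (Finset.prod_congr rfl fun v hv => by rw [if_neg (Finset.ne_of_mem_erase hv)]).symm
  have hP'eval : ∀ x, eval x P' =
      ∑ u, a x u * ∏ v ∈ Finset.univ.erase u, b x v := by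
    intro x
    rw [hP', map_sum]
    refine Finset.sum_congr rfl fun u _ => ?_
    rw [map_mul, map_prod, eval_scaleP]
    exact congrArg _ (Finset.prod_congr rfl fun v _ => eval_scaleP _ _ _)
  -- shift of the evaluation point
  have hbshift : ∀ (w : ZMod m × ZMod n) x u, b (fun i => c w i * x i) u = b x (u + w) := by
    intro w x u
    rw [hb]
    show eval (fun i => c u i * (c w i * x i)) Q = _
    rw [hcmul]
  have hashift : ∀ (w : ZMod m × ZMod n) x u, a (fun i => c w i * x i) u = a x (u + w) := by
    intro w x u
    rw [ha]
    show eval (fun i => c u i * (c w i * x i)) P = _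
    rw [hcmul]
  -- invariance of Q'
  have hQ'inv : ∀ (w : ZMod m × ZMod n) x, eval (fun i => c w i * x i) Q' = eval x Q' := by
    intro w x
    rw [hQ'eval, hQ'eval]
    rw [Finset.prod_congr rfl fun u _ => hbshift w x u]
    exact Fintype.prod_equiv (Equiv.addRight w) _ _ (fun u => by simp)
  -- invariance of P'
  have hP'inv : ∀ (w : ZMod m × ZMod n) x, eval (fun i => c w i * x i) P' = eval x P' := by
    intro w x
    rw [hP'eval, hP'eval]
    calc ∑ u, a (fun i => c w i * x i) u * ∏ v ∈ Finset.univ.erase u, b (fun i => c w i * x i) v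
        = ∑ u, a x (u + w) * ∏ v, (if v = u then 1 else b x (v + w)) := by
          refine Finset.sum_congr rfl fun u _ => ?_
          rw [hashift, hprod_erase]
          congr 1
          exact Finset.prod_congr rfl fun v _ => by rw [hbshift]
      _ = ∑ u, a x (u + w) * ∏ v, (if v = u + w then 1 else b x v) := by
          refine Finset.sum_congr rfl fun u _ => ?_
          congr 1
          refine Fintype.prod_equiv (Equiv.addRight w) _ _ (fun v => ?_)
          simp only [Equiv.coe_addRight]
          by_cases h : v = u
          · rw [if_pos h]; simp [h]
          · rw [if_neg h]; simp [h]
      _ = ∑ u, a x u * ∏ v, (if v = u then 1 else b x v) := by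
          refine Fintype.sum_equiv (Equiv.addRight w) _ _ (fun u => ?_)
          simp only [Equiv.coe_addRight]
          rfl
      _ = ∑ u, a x u * ∏ v ∈ Finset.univ.erase u, b x v := by
          exact Finset.sum_congr rfl fun u _ => by rw [hprod_erase]
  -- invariance forces exponents to be multiples of (m, n)
  have key : ∀ (w : ZMod m × ZMod n) (R : MvPolynomial (Fin 2) ℂ),
      (∀ x, eval (fun i => c w i * x i) R = eval x R) →
      ∀ d ∈ R.support, (∏ i, c w i ^ d i) = 1 := by
    intro w R hinv d hd
    have hpoly : scaleP (c w) R = R :=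
      MvPolynomial.funext fun x => by rw [eval_scaleP]; exact hinv x
    have h2 := congrArg (coeff d) hpoly
    rw [coeff_scaleP] at h2
    have hc0 : coeff d R ≠ 0 := MvPolynomial.mem_support_iff.mp hd
    have := mul_right_cancel₀ hc0 (h2.trans (one_mul (coeff d R)).symm)
    exact this
  have hval1m : (1 : ZMod m).val = 1 % m := by rw [← Nat.cast_one, ZMod.val_natCast]
  have hval1n : (1 : ZMod n).val = 1 % n := by rw [← Nat.cast_one, ZMod.val_natCast]
  have hdvd : ∀ R : MvPolynomial (Fin 2) ℂ,
      (∀ (w : ZMod m × ZMod n) x, eval (fun i => c w i * x i) R = eval x R) →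
      ∀ d ∈ R.support, m ∣ d 0 ∧ n ∣ d 1 := by
    intro R hinv d hd
    constructor
    · have h1 := key ((1 : ZMod m), (0 : ZMod n)) R (hinv _) d hd
      have hc00 : c ((1 : ZMod m), (0 : ZMod n)) 0 = ρ := by
        show ρ ^ (1 : ZMod m).val = ρ
        rw [hval1m, ← pow_mod hρm 1, pow_one]
      have hc01 : c ((1 : ZMod m), (0 : ZMod n)) 1 = 1 := by
        show τ ^ (0 : ZMod n).val = 1
        rw [ZMod.val_zero, pow_zero]
      rw [Fin.prod_univ_two, hc00, hc01, one_pow, mul_one] at h1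
      exact (hρprim.pow_eq_one_iff_dvd (d 0)).mp h1
    · have h1 := key ((0 : ZMod m), (1 : ZMod n)) R (hinv _) d hd
      have hc00 : c ((0 : ZMod m), (1 : ZMod n)) 0 = 1 := by
        show ρ ^ (0 : ZMod m).val = 1
        rw [ZMod.val_zero, pow_zero]
      have hc01 : c ((0 : ZMod m), (1 : ZMod n)) 1 = τ := by
        show τ ^ (1 : ZMod n).val = τ
        rw [hval1n, ← pow_mod hτn 1, pow_one]
      rw [Fin.prod_univ_two, hc00, hc01, one_pow, one_mul] at h1
      exact (hτprim.pow_eq_one_iff_dvd (d 1)).mp h1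
  -- pushing an invariant polynomial down through π
  have hpush : ∀ R : MvPolynomial (Fin 2) ℂ, (∀ d ∈ R.support, m ∣ d 0 ∧ n ∣ d 1) →
      ∃ R' : MvPolynomial (Fin 2) ℂ, ∀ y : Fin 2 → ℂ, eval (π y) R' = eval y R := by
    intro R hdiv
    refine ⟨∑ d ∈ R.support,
      monomial (Finsupp.equivFunOnFinite.symm ![d 0 / m, d 1 / n]) (coeff d R), fun y => ?_⟩
    rw [map_sum, eval_eq' y R]
    refine Finset.sum_congr rfl fun d hd => ?_
    obtain ⟨hdm, hdn⟩ := hdiv d hd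
    rw [eval_monomial, Finsupp.prod_fintype _ _ (fun i => pow_zero _)]
    congr 1
    rw [Fin.prod_univ_two, Fin.prod_univ_two]
    have h0 : (Finsupp.equivFunOnFinite.symm ![d 0 / m, d 1 / n]) 0 = d 0 / m := rfl
    have h1 : (Finsupp.equivFunOnFinite.symm ![d 0 / m, d 1 / n]) 1 = d 1 / n := rfl
    rw [h0, h1, hπ]
    show ((y 0 ^ m) ^ (d 0 / m)) * ((y 1 ^ n) ^ (d 1 / n)) = _
    rw [← pow_mul, ← pow_mul, Nat.mul_div_cancel' hdm, Nat.mul_div_cancel' hdn]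
  obtain ⟨Q₂, hQ₂⟩ := hpush Q' (hdvd Q' hQ'inv)
  obtain ⟨P₂, hP₂⟩ := hpush P' (hdvd P' hP'inv)
  set N : ℕ := Fintype.card (ZMod m × ZMod n) with hN
  have hNpos : 0 < N := Fintype.card_pos
  have hNC : (N : ℂ) ≠ 0 := Nat.cast_ne_zero.mpr hNpos.ne'
  -- surjectivity of π : Y → X
  have hsurj : ∀ x ∈ X, ∃ y ∈ Y, π y = x := by
    intro x hx
    obtain ⟨z0, hz0⟩ := IsAlgClosed.exists_pow_nat_eq (k := ℂ) (x 0) hm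
    obtain ⟨z1, hz1⟩ := IsAlgClosed.exists_pow_nat_eq (k := ℂ) (x 1) hn
    have hπz : π ![z0, z1] = x := by
      rw [hπ]
      funext i
      fin_cases i
      · simpa using hz0
      · simpa using hz1
    exact ⟨![z0, z1], by simp only [hY, Set.mem_preimage, hπz]; exact hx, hπz⟩
  refine ⟨MvPolynomial.C ((N : ℂ))⁻¹ * P₂, Q₂, ?_, ?_⟩
  · intro x hx
    obtain ⟨y, hy, hπy⟩ := hsurj x hx
    rw [← hπy, hQ₂, hQ'eval]
    exact Finset.prod_ne_zero_iff.mpr fun u _ => hb_ne y hy u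
  · intro x hx
    obtain ⟨y, hy, hπy⟩ := hsurj x hx
    have hQ'ne : eval y Q' ≠ 0 := by
      rw [hQ'eval]
      exact Finset.prod_ne_zero_iff.mpr fun u _ => hb_ne y hy u
    have hsplit : eval y P' / eval y Q' = ∑ u, a y u / b y u := by
      rw [hP'eval, hQ'eval, Finset.sum_div]
      refine Finset.sum_congr rfl fun u _ => ?_
      rw [← Finset.mul_prod_erase Finset.univ (b y) (Finset.mem_univ u)]
      exact mul_div_mul_right _ _
        (Finset.prod_ne_zero_iff.mpr fun v _ => hb_ne y hy v)
    have heval_num : eval x (MvPolynomial.C ((N : ℂ))⁻¹ * P₂) = (N : ℂ)⁻¹ * eval y P' := by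
      rw [← hπy, map_mul, eval_C, hP₂]
    have heval_den : eval x Q₂ = eval y Q' := by rw [← hπy, hQ₂]
    rw [heval_num, heval_den]
    have hfx : f x = f (π y) := by rw [hπy]
    -- the averaged difference
    have hterm : ∀ u : ZMod m × ZMod n,
        ‖(f ∘ π) (fun i => c u i * y i) - a y u / b y u‖ < ε :=
      fun u => happ _ (hYinv u y hy)
    have hgconst : ∀ u : ZMod m × ZMod n, (f ∘ π) (fun i => c u i * y i) = f x := by
      intro u
      show f (π fun i => c u i * y i) = f x
      rw [hπc, hπy]
    have hfinal : f x - (N : ℂ)⁻¹ * (eval y P' / eval y Q')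
        = (N : ℂ)⁻¹ * ∑ u, ((f ∘ π) (fun i => c u i * y i) - a y u / b y u) := by
      rw [hsplit, Finset.sum_sub_distrib]
      rw [Finset.sum_congr rfl fun u _ => hgconst u]
      rw [Finset.sum_const, Finset.card_univ, ← hN, nsmul_eq_mul, mul_sub]
      rw [← mul_assoc, inv_mul_cancel₀ hNC, one_mul]
    rw [mul_div_assoc, hfinal]
    have hnonempty : (Finset.univ : Finset (ZMod m × ZMod n)).Nonempty :=
      Finset.univ_nonempty
    calc ‖(N : ℂ)⁻¹ * ∑ u, ((f ∘ π) (fun i => c u i * y i) - a y u / b y u)‖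
        = (N : ℝ)⁻¹ * ‖∑ u, ((f ∘ π) (fun i => c u i * y i) - a y u / b y u)‖ := by
          rw [norm_mul]
          congr 1
          rw [norm_inv]
          congr 1
          exact Complex.norm_natCast N
      _ ≤ (N : ℝ)⁻¹ * ∑ u, ‖(f ∘ π) (fun i => c u i * y i) - a y u / b y u‖ := by
          apply mul_le_mul_of_nonneg_left (norm_sum_le _ _)
          positivity
      _ < (N : ℝ)⁻¹ * (N * ε) := by
          apply mul_lt_mul_of_pos_left _ (by positivity)
          calc ∑ u, ‖(f ∘ π) (fun i => c u i * y i) - a y u / b y u‖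
              < ∑ _u : ZMod m × ZMod n, ε :=
                Finset.sum_lt_sum_of_nonempty hnonempty fun u _ => hterm u
            _ = N * ε := by rw [Finset.sum_const, Finset.card_univ, ← hN, nsmul_eq_mul]
      _ = ε := by
          rw [← mul_assoc, inv_mul_cancel₀ (by positivity), one_mul]
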